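/- Let A be an (n,d)-type. The Minkowski cell C_A = Σ_{i=1}^n conv{e_j : j ∈ A_i} equals the set of points x ∈ ℝ^d expressible as x = Σ_{i=1}^n y^{(i)} with each y^{(i)} a convex combination of {e_j : j ∈ A_i}, and the integral points of C_A (points in ℤ^d ∩ C_A) are exactly the points Σ_{i=1}^n e_{b_i} over all choices b_i ∈ A_i... in particular every integral point of C_A is of the form Σ_i e_{b_i} with b_i ∈ A_i for all i. -/

import Mathlib

open Finset

/-- An `(n,d)`-type: an `n`-tuple of subsets of `[d]`. -/
abbrev NDType (n d : ℕ) := Fin n → Finset (Fin d)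

/-- All entries nonempty. -/
def IsType {n d : ℕ} (A : NDType n d) : Prop := ∀ i, (A i).Nonempty

/-- A directed edge `u → v` of the comparability graph `CG(A,B)`:
for some coordinate `i`, `u ∈ A i`, `v ∈ B i`, and not both lie in `A i ∩ B i`. -/
def DirEdge {n d : ℕ} (A B : NDType n d) (u v : Fin d) : Prop :=
  u ≠ v ∧ ∃ i, u ∈ A i ∧ v ∈ B i ∧ ¬ (u ∈ A i ∩ B i ∧ v ∈ A i ∩ B i)

/-- An undirected edge of `CG(A,B)`: both endpoints lie in some `A i ∩ B i`. -/
def UndirEdge {n d : ℕ} (A B : NDType n d) (u v : Fin d) : Prop :=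
  u ≠ v ∧ ∃ i, u ∈ A i ∩ B i ∧ v ∈ A i ∩ B i

/-- A step of a directed walk in `CG(A,B)`: a directed edge in the right
direction, or an undirected edge. -/
def Step {n d : ℕ} (A B : NDType n d) (u v : Fin d) : Prop :=
  DirEdge A B u v ∨ UndirEdge A B u v

/-- `CG(A,B)` contains a directed cycle: a closed walk all of whose directed
edges point in the walk direction, with at least one directed edge. -/
def HasDirectedCycle {n d : ℕ} (A B : NDType n d) : Prop :=
  ∃ (k : ℕ) (v : Fin (k + 1) → Fin d),
    v 0 = v (Fin.last k) ∧
    (∀ i : Fin k, Step A B (v i.castSucc) (v i.succ)) ∧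
    (∃ i : Fin k, DirEdge A B (v i.castSucc) (v i.succ))

/-- The comparability graph `CG(A,B)` is acyclic. -/
def Acyclic {n d : ℕ} (A B : NDType n d) : Prop := ¬ HasDirectedCycle A B

/-- An ordered partition of `[d]` into `k` (nonempty, ordered) parts. -/
def IsOrderedPartition {d k : ℕ} (P : Fin k → Finset (Fin d)) : Prop :=
  (∀ a, (P a).Nonempty) ∧ (∀ a b, a ≠ b → Disjoint (P a) (P b)) ∧
    (∀ j : Fin d, ∃ a, j ∈ P a)

/-- `B` is the refinement `A|P` of `A` with respect to the ordered partition `P`: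
`B i = A i ∩ P (m i)` where `m i` is the least index with nonempty intersection. -/
def IsRefinementBy {n d k : ℕ} (A : NDType n d) (P : Fin k → Finset (Fin d))
    (B : NDType n d) : Prop :=
  ∀ i, ∃ a, (A i ∩ P a).Nonempty ∧ (∀ b, b < a → A i ∩ P b = ∅) ∧
    B i = A i ∩ P a

/-- `B` is a refinement of `A` (with respect to some ordered partition). -/
def IsRefinement {n d : ℕ} (B A : NDType n d) : Prop :=
  ∃ (k : ℕ) (P : Fin k → Finset (Fin d)),
    IsOrderedPartition P ∧ IsRefinementBy A P B

/-- A total refinement: a refinement all of whose entries are singletons. -/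
def IsTotalRefinement {n d : ℕ} (B A : NDType n d) : Prop :=
  IsRefinement B A ∧ ∀ i, ∃ j, B i = {j}

/-- A tope: a type all of whose entries are singletons. -/
def IsTope {n d : ℕ} (A : NDType n d) : Prop := ∀ i, ∃ j, A i = {j}
open Pointwise

/-- The `j`-th standard basis vector of `ℝ^d`. -/
noncomputable def stdVec {d : ℕ} (j : Fin d) : Fin d → ℝ := Pi.single j 1

/-- The Minkowski cell `C_A = Σᵢ conv{e_j : j ∈ A i} ⊆ ℝ^d` of an `(n,d)`-type. -/
noncomputable def cell {n d : ℕ} (A : NDType n d) : Set (Fin d → ℝ) :=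
  ∑ i : Fin n, convexHull ℝ (stdVec '' (A i : Set (Fin d)))

/-- The dilated simplex `nΔ^{d-1} ⊆ ℝ^d`. -/
def dilSimplex (n d : ℕ) : Set (Fin d → ℝ) :=
  {x | (∀ j, 0 ≤ x j) ∧ ∑ j, x j = (n : ℝ)}

/-- A mixed subdivision of `nΔ^{d-1}`, encoded by the set of types of its cells:
all entries of a cell type are nonempty, the family of cells is closed under
faces (= refinements), any two cells intersect in the Minkowski sum of the
intersections of their summands, and the cells cover `nΔ^{d-1}`. -/
structure MixedSubdivision (n d : ℕ) where
  cells : Set (NDType n d)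
  isType : ∀ A ∈ cells, IsType A
  refine_closed : ∀ A ∈ cells, ∀ B, IsRefinement B A → B ∈ cells
  inter : ∀ A ∈ cells, ∀ B ∈ cells,
    cell A ∩ cell B = cell (fun i => A i ∩ B i)
  covers : ⋃ A ∈ cells, cell A = dilSimplex n d

/-- Membership in the convex hull of the basis vectors indexed by `s` gives the
standard simplex conditions. -/
lemma mem_hull_props {d : ℕ} (s : Finset (Fin d)) {y : Fin d → ℝ}
    (h : y ∈ convexHull ℝ (stdVec '' (s : Set (Fin d)))) :
    (∀ j, 0 ≤ y j) ∧ (∑ j, y j = 1) ∧ (∀ j, y j ≠ 0 → j ∈ s) := by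
  classical
  set K : Set (Fin d → ℝ) :=
    {z | (∀ j, 0 ≤ z j) ∧ (∑ j, z j = 1) ∧ (∀ j, z j ≠ 0 → j ∈ s)} with hKdef
  have hK : Convex ℝ K := by
    rintro u ⟨hu0, hu1, hus⟩ v ⟨hv0, hv1, hvs⟩ a b ha hb hab
    refine ⟨fun j => ?_, ?_, fun j hj => ?_⟩
    · have : (a • u + b • v) j = a * u j + b * v j := by simp
      rw [this]
      exact add_nonneg (mul_nonneg ha (hu0 j)) (mul_nonneg hb (hv0 j))
    · have : ∑ j, (a • u + b • v) j = a * ∑ j, u j + b * ∑ j, v j := by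
        simp [Finset.sum_add_distrib, Finset.mul_sum]
      rw [this, hu1, hv1]; ring_nf; exact hab
    · by_contra hjs
      have hu : u j = 0 := by
        by_contra h'; exact hjs (hus j h')
      have hv : v j = 0 := by
        by_contra h'; exact hjs (hvs j h')
      apply hj
      simp [hu, hv]
  have hsub : stdVec '' (s : Set (Fin d)) ⊆ K := by
    rintro _ ⟨j, hj, rfl⟩
    refine ⟨fun k => ?_, ?_, fun k hk => ?_⟩
    · simp only [stdVec, Pi.single_apply]
      split <;> norm_num
    · simp [stdVec, Pi.single_apply]
    · simp only [stdVec, Pi.single_apply] at hk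
      by_cases hkj : k = j
      · subst hkj; exact hj
      · simp [hkj] at hk
  exact convexHull_min hsub hK h

lemma card_filter_val_lt {n m : ℕ} (h : m ≤ n) :
    ((univ : Finset (Fin n)).filter (fun c : Fin n => (c : ℕ) < m)).card = m := by
  have key : ((univ : Finset (Fin n)).filter (fun c : Fin n => (c : ℕ) < m)).card
      = (Finset.range m).card := by
    apply Finset.card_bij (fun (a : Fin n) (_ : a ∈ (univ : Finset (Fin n)).filter
      (fun c : Fin n => (c : ℕ) < m)) => (a : ℕ))
    · intro a ha; rw [mem_filter] at ha; exact mem_range.mpr ha.2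
    · intro a _ b _ hab; exact Fin.val_injective hab
    · intro c hc
      rw [mem_range] at hc
      exact ⟨⟨c, lt_of_lt_of_le hc h⟩, by simp [mem_filter, hc], rfl⟩
  rw [key, Finset.card_range]

/-- The Minkowski cell `C_A` is the set of sums
`Σᵢ y i` with each `y i ∈ conv{e_j : j ∈ A i}`, and every integral point of
`C_A` is of the form `Σᵢ e_{b i}` with `b i ∈ A i` for all `i`. -/
theorem cell_description {n d : ℕ} (A : NDType n d) (hA : IsType A) :
    cell A = {x | ∃ y : Fin n → (Fin d → ℝ),
        (∀ i, y i ∈ convexHull ℝ (stdVec '' (A i : Set (Fin d)))) ∧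
        x = ∑ i, y i} ∧
    (∀ x ∈ cell A, (∀ j, ∃ m : ℤ, x j = (m : ℝ)) →
      ∃ b : Fin n → Fin d, (∀ i, b i ∈ A i) ∧ x = ∑ i, stdVec (b i)) := by
  classical
  have hset : cell A = {x | ∃ y : Fin n → (Fin d → ℝ),
      (∀ i, y i ∈ convexHull ℝ (stdVec '' (A i : Set (Fin d)))) ∧
      x = ∑ i, y i} := by
    ext x
    rw [cell, Set.mem_fintype_sum]
    constructor
    · rintro ⟨g, hg, rfl⟩; exact ⟨g, hg, rfl⟩
    · rintro ⟨g, hg, rfl⟩; exact ⟨g, hg, rfl⟩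
  refine ⟨hset, ?_⟩
  intro x hx hint
  rw [hset] at hx
  obtain ⟨y, hy, rfl⟩ := hx
  have hy0 : ∀ i j, 0 ≤ y i j := fun i j => (mem_hull_props (A i) (hy i)).1 j
  have hy1 : ∀ i, ∑ j, y i j = 1 := fun i => (mem_hull_props (A i) (hy i)).2.1
  have hys : ∀ i j, y i j ≠ 0 → j ∈ A i := fun i => (mem_hull_props (A i) (hy i)).2.2
  have hxj : ∀ j, (∑ i, y i) j = ∑ i, y i j := fun j => by simp
  -- integer values
  have hMex : ∀ j, ∃ M : ℕ, ((M : ℝ)) = ∑ i, y i j := by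
    intro j
    obtain ⟨m, hm⟩ := hint j
    rw [hxj j] at hm
    have hm0 : (0 : ℝ) ≤ (m : ℝ) := by
      rw [← hm]; exact Finset.sum_nonneg fun i _ => hy0 i j
    refine ⟨m.toNat, ?_⟩
    rw [hm]
    exact_mod_cast Int.toNat_of_nonneg (by exact_mod_cast hm0)
  choose M hM using hMex
  have hMn : ∑ j, M j = n := by
    have : ((∑ j, M j : ℕ) : ℝ) = ((n : ℕ) : ℝ) := by
      push_cast
      rw [Finset.sum_congr rfl fun j _ => hM j, Finset.sum_comm]
      simp [hy1]
    exact_mod_cast this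
  have hMle : ∀ j, M j ≤ n := fun j => hMn ▸ Finset.single_le_sum (f := M) (fun _ _ => Nat.zero_le _) (mem_univ j)
  -- Hall's theorem setup
  set T : Fin n → Finset (Fin d × Fin n) :=
    fun i => univ.filter (fun p => y i p.1 ≠ 0 ∧ (p.2 : ℕ) < M p.1) with hT
  have hall : ∀ S : Finset (Fin n), S.card ≤ (S.biUnion T).card := by
    intro S
    set J : Finset (Fin d) := S.biUnion (fun i => univ.filter fun j => y i j ≠ 0) with hJ
    have hTJ : S.biUnion T = J.biUnion
        (fun j => {j} ×ˢ (univ.filter fun c : Fin n => (c : ℕ) < M j)) := by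
      ext p
      simp only [mem_biUnion, hT, hJ, mem_filter, mem_univ, true_and, mem_product,
        mem_singleton]
      constructor
      · rintro ⟨i, hiS, hy', hlt⟩; exact ⟨p.1, ⟨i, hiS, hy'⟩, rfl, hlt⟩
      · rintro ⟨j, ⟨i, hiS, hy'⟩, rfl, hlt⟩; exact ⟨i, hiS, hy', hlt⟩
    have hcard : (S.biUnion T).card = ∑ j ∈ J, M j := by
      rw [hTJ, Finset.card_biUnion]
      · refine Finset.sum_congr rfl fun j _ => ?_
        rw [Finset.card_product, Finset.card_singleton, one_mul, card_filter_val_lt (hMle j)]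
      · intro a _ b _ hab
        simp only [Finset.disjoint_left, mem_product, mem_singleton]
        rintro p ⟨rfl, -⟩ ⟨h2, -⟩
        exact hab h2
    rw [hcard]
    have hreal : (S.card : ℝ) ≤ ∑ j ∈ J, (M j : ℝ) := by
      have h1 : ∀ j ∈ J, (M j : ℝ) ≥ ∑ i ∈ S, y i j := by
        intro j _
        rw [hM j]
        exact Finset.sum_le_sum_of_subset_of_nonneg (Finset.subset_univ S)
          (fun i _ _ => hy0 i j)
      calc (S.card : ℝ) = ∑ i ∈ S, (1 : ℝ) := by simp
        _ = ∑ i ∈ S, ∑ j ∈ J, y i j := by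
            refine Finset.sum_congr rfl fun i hiS => ?_
            rw [← hy1 i]
            refine (Finset.sum_subset (Finset.subset_univ J) ?_).symm
            intro j _ hjJ
            by_contra h'
            exact hjJ (by simp only [hJ, mem_biUnion]; exact ⟨i, hiS, by simp [h']⟩)
        _ = ∑ j ∈ J, ∑ i ∈ S, y i j := Finset.sum_comm
        _ ≤ ∑ j ∈ J, (M j : ℝ) := Finset.sum_le_sum h1
    exact_mod_cast hreal
  obtain ⟨f, hfinj, hfT⟩ := (Finset.all_card_le_biUnion_card_iff_exists_injective T).mp hall
  set b : Fin n → Fin d := fun i => (f i).1 with hb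
  have hbA : ∀ i, b i ∈ A i := by
    intro i
    have := hfT i
    rw [hT, mem_filter] at this
    exact hys i _ this.2.1
  -- fiber counts
  set N : Fin d → ℕ := fun j => (univ.filter fun i => b i = j).card with hN
  have hNle : ∀ j, N j ≤ M j := by
    intro j
    rw [hN, ← card_filter_val_lt (hMle j)]
    refine Finset.card_le_card_of_injOn (fun i => (f i).2) ?_ ?_
    · intro i hi
      rw [Finset.mem_coe, mem_filter] at hi
      have hti := hfT i
      rw [hT, mem_filter] at hti
      simp only [Finset.mem_coe, mem_filter, mem_univ, true_and]
      have hlt : ((f i).2 : ℕ) < M (f i).1 := hti.2.2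
      rwa [show (f i).1 = j from hi.2] at hlt
    · intro i1 h1 i2 h2 heq
      simp only [Finset.coe_filter, Set.mem_setOf_eq] at h1 h2
      apply hfinj
      exact Prod.ext (h1.2.trans h2.2.symm) heq
  have hNsum : ∑ j, N j = n := by
    have := Finset.card_eq_sum_card_fiberwise
      (f := b) (s := (univ : Finset (Fin n))) (t := (univ : Finset (Fin d)))
      (fun i _ => mem_univ _)
    simpa [hN] using this.symm
  have hNM : ∀ j, N j = M j := by
    have hsum : ∑ j, N j = ∑ j, M j := by rw [hNsum, hMn]
    intro j
    by_contra hne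
    have hlt : N j < M j := lt_of_le_of_ne (hNle j) hne
    have : ∑ j, N j < ∑ j, M j :=
      Finset.sum_lt_sum (fun k _ => hNle k) ⟨j, mem_univ j, hlt⟩
    omega
  refine ⟨b, hbA, ?_⟩
  funext j
  have hrhs : (∑ i, stdVec (b i)) j = (N j : ℝ) := by
    calc (∑ i, stdVec (b i)) j = ∑ i, stdVec (b i) j := by simp
      _ = ∑ i, (if b i = j then (1:ℝ) else 0) :=
          Finset.sum_congr rfl fun i _ => by simp [stdVec, Pi.single_apply, eq_comm]
      _ = (N j : ℝ) := by rw [Finset.sum_boole, hN]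
  rw [hxj j, ← hM j, hrhs, hNM j]
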